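/- Let d ≥ 1 be an integer. For every coupling μ of χ_d with itself, the negative monotone coupling μ_NM satisfies ∫ (x² + y²)² dμ_NM(x,y) ≤ ∫ (x² + y²)² dμ(x,y). That is, μ_NM minimizes the expected value of (x² + y²)² among all probability measures on ℝ × ℝ with both marginals equal to χ_d. -/

import Mathlib

open MeasureTheory ProbabilityTheory Set Filter
open scoped ENNReal NNReal

noncomputable section

/-- The standard Gaussian measure on `ℝ^d` (the `d`-fold product of `N(0,1)`),
realized on `EuclideanSpace ℝ (Fin d)` so that the norm is the Euclidean norm. -/
def stdGaussian (d : ℕ) : Measure (EuclideanSpace ℝ (Fin d)) :=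
  (Measure.pi fun _ : Fin d => gaussianReal 0 1).map
    (EuclideanSpace.equiv (Fin d) ℝ).symm

/-- The chi distribution with `d` degrees of freedom: the law of the Euclidean norm of a
standard Gaussian vector in `ℝ^d`. -/
def chi (d : ℕ) : Measure ℝ := (stdGaussian d).map fun x => ‖x‖

/-- The cumulative distribution function of `χ_d`. -/
def chiCDF (d : ℕ) (x : ℝ) : ℝ := (chi d (Set.Iic x)).toReal

/-- The quantile function `F⁻¹(u) = inf {x : F x ≥ u}` of `χ_d`. -/
def chiQuantile (d : ℕ) (u : ℝ) : ℝ := sInf {x : ℝ | u ≤ chiCDF d x}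

/-- The negative monotone coupling of `χ_d` with itself: the pushforward of the uniform
probability measure on `[0,1]` under `u ↦ (F⁻¹(u), F⁻¹(1 - u))`. -/
def muNM (d : ℕ) : Measure (ℝ × ℝ) :=
  ((volume : Measure ℝ).restrict (Set.Icc 0 1)).map
    fun u => (chiQuantile d u, chiQuantile d (1 - u))

namespace NMaux

variable {d : ℕ}

lemma measurable_symm_equiv (d : ℕ) :
    Measurable ((EuclideanSpace.equiv (Fin d) ℝ).symm : (Fin d → ℝ) → EuclideanSpace ℝ (Fin d)) :=
  (EuclideanSpace.equiv (Fin d) ℝ).symm.continuous.measurable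

instance (d : ℕ) : IsProbabilityMeasure (stdGaussian d) := by
  unfold _root_.stdGaussian
  exact Measure.isProbabilityMeasure_map (measurable_symm_equiv d).aemeasurable

instance (d : ℕ) : IsProbabilityMeasure (chi d) := by
  unfold chi
  exact Measure.isProbabilityMeasure_map measurable_norm.aemeasurable

lemma chi_Iio_zero (d : ℕ) : chi d (Iio 0) = 0 := by
  unfold chi
  rw [Measure.map_apply measurable_norm measurableSet_Iio]
  have : ((fun x : EuclideanSpace ℝ (Fin d) => ‖x‖) ⁻¹' Iio 0) = ∅ := by
    ext x
    simp [not_lt.2 (norm_nonneg x)]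
  simp [this]

lemma cdf_neg {x : ℝ} (hx : x < 0) : cdf (chi d) x = 0 := by
  have h1 : ENNReal.ofReal (cdf (chi d) x) = chi d (Iic x) := ofReal_cdf _ x
  have h2 : chi d (Iic x) = 0 :=
    measure_mono_null (fun y hy => lt_of_le_of_lt hy hx) (chi_Iio_zero d)
  have := h1.trans h2
  have h3 := cdf_nonneg (chi d) x
  rw [ENNReal.ofReal_eq_zero] at this
  linarith

lemma chiQuantile_eq (u : ℝ) :
    chiQuantile d u = sInf {x : ℝ | u ≤ cdf (chi d) x} := by
  unfold chiQuantile chiCDF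
  congr 1
  ext x
  simp only [mem_setOf_eq, cdf_eq_real, measureReal_def]

lemma quantile_set_subset {u : ℝ} (hu : 0 < u) :
    {x : ℝ | u ≤ cdf (chi d) x} ⊆ Ici 0 := by
  intro y hy
  by_contra h
  simp only [mem_Ici, not_le] at h
  rw [mem_setOf_eq, cdf_neg h] at hy
  linarith

lemma quantile_set_nonempty {u : ℝ} (hu : u < 1) :
    {x : ℝ | u ≤ cdf (chi d) x}.Nonempty := by
  have h := (tendsto_cdf_atTop (chi d)).eventually (eventually_ge_nhds hu)
  exact h.exists

lemma quantile_set_bddBelow {u : ℝ} (hu : 0 < u) :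
    BddBelow {x : ℝ | u ≤ cdf (chi d) x} :=
  ⟨0, fun y hy => quantile_set_subset hu hy⟩

lemma le_cdf_chiQuantile {u : ℝ} (hu : u ∈ Ioo (0:ℝ) 1) :
    u ≤ cdf (chi d) (chiQuantile d u) := by
  rw [chiQuantile_eq]
  set S := {x : ℝ | u ≤ cdf (chi d) x} with hS
  have hbdd : BddBelow S := quantile_set_bddBelow hu.1
  have hne : S.Nonempty := quantile_set_nonempty hu.2
  have h1 : ∀ y ∈ Ioi (sInf S), u ≤ cdf (chi d) y := by
    intro y hy
    obtain ⟨z, hz, hzy⟩ := (csInf_lt_iff hbdd hne).1 hy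
    exact hz.trans (monotone_cdf (chi d) hzy.le)
  have h2 : Tendsto (cdf (chi d)) (nhdsWithin (sInf S) (Ioi (sInf S)))
      (nhds (cdf (chi d) (sInf S))) :=
    tendsto_nhdsWithin_mono_left Ioi_subset_Ici_self ((cdf (chi d)).right_continuous _)
  exact ge_of_tendsto h2 (eventually_nhdsWithin_of_forall h1)

lemma galois {u x : ℝ} (hu : u ∈ Ioo (0:ℝ) 1) :
    chiQuantile d u ≤ x ↔ u ≤ cdf (chi d) x := by
  constructor
  · intro h
    exact (le_cdf_chiQuantile hu).trans (monotone_cdf (chi d) h)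
  · intro h
    rw [chiQuantile_eq]
    exact csInf_le (quantile_set_bddBelow hu.1) h

lemma lt_chiQuantile {u x : ℝ} (hu : u ∈ Ioo (0:ℝ) 1) :
    x < chiQuantile d u ↔ cdf (chi d) x < u := by
  rw [← not_le, ← not_le, galois hu]

lemma chiQuantile_nonneg {u : ℝ} (hu : u ∈ Ioo (0:ℝ) 1) : 0 ≤ chiQuantile d u := by
  by_contra h
  push_neg at h
  have := le_cdf_chiQuantile (d := d) hu
  rw [cdf_neg h] at this
  linarith [hu.1]

/-- Measurable version of the quantile function: zero outside `(0,1)`. -/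
def G (d : ℕ) : ℝ → ℝ := (Ioo (0:ℝ) 1).indicator (chiQuantile d)

lemma G_eq {u : ℝ} (hu : u ∈ Ioo (0:ℝ) 1) : G d u = chiQuantile d u :=
  indicator_of_mem hu _

lemma measurable_G (d : ℕ) : Measurable (G d) := by
  apply measurable_of_Iic
  intro x
  by_cases h0 : (0:ℝ) ≤ x
  · have : G d ⁻¹' Iic x = (Ioo (0:ℝ) 1 ∩ Iic (cdf (chi d) x)) ∪ (Ioo (0:ℝ) 1)ᶜ := by
      ext u
      by_cases hu : u ∈ Ioo (0:ℝ) 1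
      · simp only [mem_preimage, mem_Iic, mem_union, mem_inter_iff, mem_compl_iff, hu,
          not_true_eq_false, or_false, true_and, G_eq hu, galois hu]
      · simp only [mem_preimage, mem_Iic, mem_union, mem_inter_iff, mem_compl_iff, hu,
          not_false_eq_true, or_true, iff_true, G, indicator_of_notMem hu, h0]
    rw [this]
    exact ((measurableSet_Ioo.inter measurableSet_Iic).union measurableSet_Ioo.compl)
  · have : G d ⁻¹' Iic x = Ioo (0:ℝ) 1 ∩ Iic (cdf (chi d) x) := by
      ext u
      by_cases hu : u ∈ Ioo (0:ℝ) 1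
      · simp only [mem_preimage, mem_Iic, mem_inter_iff, hu, true_and, G_eq hu, galois hu]
      · simp only [mem_preimage, mem_Iic, mem_inter_iff, hu, false_and, iff_false, G,
          indicator_of_notMem hu, not_le]
        push_neg at h0
        exact h0
    rw [this]
    exact measurableSet_Ioo.inter measurableSet_Iic

lemma Ioo_inter_Iic (c : ℝ) (hc0 : 0 ≤ c) (hc1 : c ≤ 1) :
    volume (Ioo (0:ℝ) 1 ∩ Iic c) = ENNReal.ofReal c := by
  rcases lt_or_ge c 1 with hlt | hge
  · have : Ioo (0:ℝ) 1 ∩ Iic c = Ioc 0 c := by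
      ext u
      simp only [mem_inter_iff, mem_Ioo, mem_Iic, mem_Ioc]
      constructor
      · rintro ⟨⟨h1, _⟩, h3⟩; exact ⟨h1, h3⟩
      · rintro ⟨h1, h2⟩; exact ⟨⟨h1, lt_of_le_of_lt h2 hlt⟩, h2⟩
    rw [this, Real.volume_Ioc, sub_zero]
  · have hc : c = 1 := le_antisymm hc1 hge
    subst hc
    have : Ioo (0:ℝ) 1 ∩ Iic 1 = Ioo (0:ℝ) 1 := by
      apply inter_eq_left.2
      intro u hu
      exact le_of_lt hu.2
    rw [this, Real.volume_Ioo, sub_zero]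

lemma map_G (d : ℕ) : (volume.restrict (Ioo (0:ℝ) 1)).map (G d) = chi d := by
  have hG := measurable_G d
  have hfin : IsFiniteMeasure ((volume.restrict (Ioo (0:ℝ) 1)).map (G d)) := by
    constructor
    rw [Measure.map_apply hG MeasurableSet.univ]
    simp [Real.volume_Ioo]
  refine Measure.ext_of_Iic _ _ (fun x => ?_)
  rw [Measure.map_apply hG measurableSet_Iic,
    Measure.restrict_apply (hG measurableSet_Iic)]
  have hset : G d ⁻¹' Iic x ∩ Ioo (0:ℝ) 1 = Ioo (0:ℝ) 1 ∩ Iic (cdf (chi d) x) := by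
    ext u
    constructor
    · rintro ⟨hle, hu⟩
      rw [mem_preimage, mem_Iic, G_eq hu, galois hu] at hle
      exact ⟨hu, hle⟩
    · rintro ⟨hu, hle⟩
      rw [mem_Iic] at hle
      refine ⟨?_, hu⟩
      rw [mem_preimage, mem_Iic, G_eq hu, galois hu]
      exact hle
  rw [hset, Ioo_inter_Iic _ (cdf_nonneg _ _) (cdf_le_one _ _), ofReal_cdf]

lemma measurePreserving_one_sub :
    MeasurePreserving (fun u : ℝ => 1 - u) (volume.restrict (Ioo (0:ℝ) 1))
      (volume.restrict (Ioo (0:ℝ) 1)) := by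
  have h : MeasurePreserving (fun u : ℝ => 1 - u) volume volume := by
    have h1 : MeasurePreserving (fun u : ℝ => -u) (volume : Measure ℝ) volume :=
      Measure.measurePreserving_neg _
    have h2 : MeasurePreserving (fun u : ℝ => 1 + u) (volume : Measure ℝ) volume :=
      ⟨measurable_const_add 1, map_add_left_eq_self volume 1⟩
    have h3 := h2.comp h1
    have heq : (fun u : ℝ => 1 - u) = (fun u : ℝ => 1 + u) ∘ (fun u : ℝ => -u) := by
      ext u; simp [Function.comp]; ring
    rw [heq]; exact h3
  have hpre : (fun u : ℝ => 1 - u) ⁻¹' Ioo (0:ℝ) 1 = Ioo (0:ℝ) 1 := by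
    ext u
    simp only [mem_preimage, mem_Ioo]
    constructor <;> rintro ⟨h1, h2⟩ <;> constructor <;> linarith
  have := h.restrict_preimage (measurableSet_Ioo (a := (0:ℝ)) (b := 1))
  rwa [hpre] at this

lemma one_sub_mem {u : ℝ} (hu : u ∈ Ioo (0:ℝ) 1) : 1 - u ∈ Ioo (0:ℝ) 1 := by
  simp only [mem_Ioo] at hu ⊢
  constructor <;> linarith [hu.1, hu.2]

lemma muNM_eq (d : ℕ) :
    muNM d = (volume.restrict (Ioo (0:ℝ) 1)).map (fun u => (G d u, G d (1 - u))) := by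
  unfold muNM
  rw [← Measure.restrict_congr_set (Ioo_ae_eq_Icc (μ := volume) (a := (0:ℝ)) (b := 1))]
  apply Measure.map_congr
  filter_upwards [ae_restrict_mem measurableSet_Ioo] with u hu
  rw [G_eq hu, G_eq (one_sub_mem hu)]

lemma measurable_pairG (d : ℕ) : Measurable (fun u => (G d u, G d (1 - u))) :=
  (measurable_G d).prodMk ((measurable_G d).comp (measurable_const.sub measurable_id))

instance : IsFiniteMeasure (muNM d) := by
  rw [muNM_eq]
  constructor
  rw [Measure.map_apply (measurable_pairG d) MeasurableSet.univ]
  simp [Real.volume_Ioo]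

/-- The reference measure on pairs of thresholds. -/
def σm : Measure (ℝ × ℝ) :=
  (volume.restrict (Ioi (0:ℝ))).prod (volume.restrict (Ioi (0:ℝ)))

instance : SFinite σm := by unfold σm; infer_instance

lemma event_measurableSet (q : ℝ × ℝ) :
    MeasurableSet {p : ℝ × ℝ | q.1 < p.1 ^ 2 ∧ q.2 < p.2 ^ 2} := by
  have h1 : Measurable fun p : ℝ × ℝ => p.1 ^ 2 := measurable_fst.pow_const 2
  have h2 : Measurable fun p : ℝ × ℝ => p.2 ^ 2 := measurable_snd.pow_const 2
  exact (h1 measurableSet_Ioi).inter (h2 measurableSet_Ioi)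

lemma T_measurableSet :
    MeasurableSet {z : (ℝ × ℝ) × ℝ × ℝ | z.2.1 < z.1.1 ^ 2 ∧ z.2.2 < z.1.2 ^ 2} := by
  have h1 : Measurable fun z : (ℝ × ℝ) × ℝ × ℝ => z.1.1 ^ 2 := measurable_fst.fst.pow_const 2
  have h2 : Measurable fun z : (ℝ × ℝ) × ℝ × ℝ => z.1.2 ^ 2 := measurable_fst.snd.pow_const 2
  have h3 : Measurable fun z : (ℝ × ℝ) × ℝ × ℝ => z.2.1 := measurable_snd.fst
  have h4 : Measurable fun z : (ℝ × ℝ) × ℝ × ℝ => z.2.2 := measurable_snd.snd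
  exact (measurableSet_lt h3 h1).inter (measurableSet_lt h4 h2)

lemma σm_section (p : ℝ × ℝ) :
    σm {q : ℝ × ℝ | q.1 < p.1 ^ 2 ∧ q.2 < p.2 ^ 2}
      = ENNReal.ofReal (p.1 ^ 2) * ENNReal.ofReal (p.2 ^ 2) := by
  have hset : {q : ℝ × ℝ | q.1 < p.1 ^ 2 ∧ q.2 < p.2 ^ 2} = Iio (p.1 ^ 2) ×ˢ Iio (p.2 ^ 2) := by
    ext q; simp [Set.mem_prod]
  rw [hset]
  unfold σm
  rw [Measure.prod_prod, Measure.restrict_apply measurableSet_Iio,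
    Measure.restrict_apply measurableSet_Iio]
  have h1 : Iio (p.1 ^ 2) ∩ Ioi 0 = Ioo (0:ℝ) (p.1 ^ 2) := by
    ext z; simp [mem_Ioo, and_comm]
  have h2 : Iio (p.2 ^ 2) ∩ Ioi 0 = Ioo (0:ℝ) (p.2 ^ 2) := by
    ext z; simp [mem_Ioo, and_comm]
  rw [h1, h2, Real.volume_Ioo, Real.volume_Ioo, sub_zero, sub_zero]

/-- Layer-cake representation of the cross term. -/
lemma cross_eq (κ : Measure (ℝ × ℝ)) [SFinite κ] :
    ∫⁻ p, ENNReal.ofReal (p.1 ^ 2) * ENNReal.ofReal (p.2 ^ 2) ∂κ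
      = ∫⁻ q, κ {p : ℝ × ℝ | q.1 < p.1 ^ 2 ∧ q.2 < p.2 ^ 2} ∂σm := by
  have hT := T_measurableSet
  set T := {z : (ℝ × ℝ) × ℝ × ℝ | z.2.1 < z.1.1 ^ 2 ∧ z.2.2 < z.1.2 ^ 2} with hTdef
  have hmeas : AEMeasurable (Function.uncurry fun (p q : ℝ × ℝ) =>
      T.indicator (fun _ => (1 : ℝ≥0∞)) (p, q)) (κ.prod σm) := by
    have : (Function.uncurry fun (p q : ℝ × ℝ) =>
        T.indicator (fun _ => (1 : ℝ≥0∞)) (p, q)) = T.indicator (fun _ => (1 : ℝ≥0∞)) := by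
      ext z
      rfl
    rw [this]
    exact ((measurable_const.indicator hT)).aemeasurable
  calc ∫⁻ p, ENNReal.ofReal (p.1 ^ 2) * ENNReal.ofReal (p.2 ^ 2) ∂κ
      = ∫⁻ p, ∫⁻ q, T.indicator (fun _ => (1 : ℝ≥0∞)) (p, q) ∂σm ∂κ := by
        refine lintegral_congr fun p => ?_
        have h1 : ∀ q : ℝ × ℝ, T.indicator (fun _ => (1 : ℝ≥0∞)) (p, q)
            = ({q : ℝ × ℝ | q.1 < p.1 ^ 2 ∧ q.2 < p.2 ^ 2}).indicator
              (fun _ => (1 : ℝ≥0∞)) q := by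
          intro q
          by_cases h : (p, q) ∈ T
          · rw [indicator_of_mem h, indicator_of_mem (by exact h)]
          · rw [indicator_of_notMem h, indicator_of_notMem (by exact h)]
        have hmB : MeasurableSet {q : ℝ × ℝ | q.1 < p.1 ^ 2 ∧ q.2 < p.2 ^ 2} :=
          (measurable_fst measurableSet_Iio).inter (measurable_snd measurableSet_Iio)
        rw [lintegral_congr h1, lintegral_indicator hmB, setLIntegral_one, σm_section]
    _ = ∫⁻ q, ∫⁻ p, T.indicator (fun _ => (1 : ℝ≥0∞)) (p, q) ∂κ ∂σm :=
        lintegral_lintegral_swap hmeas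
    _ = ∫⁻ q, κ {p : ℝ × ℝ | q.1 < p.1 ^ 2 ∧ q.2 < p.2 ^ 2} ∂σm := by
        refine lintegral_congr fun q => ?_
        have h1 : ∀ p : ℝ × ℝ, T.indicator (fun _ => (1 : ℝ≥0∞)) (p, q)
            = ({p : ℝ × ℝ | q.1 < p.1 ^ 2 ∧ q.2 < p.2 ^ 2}).indicator
              (fun _ => (1 : ℝ≥0∞)) p := by
          intro p
          by_cases h : (p, q) ∈ T
          · rw [indicator_of_mem h, indicator_of_mem (by exact h)]
          · rw [indicator_of_notMem h, indicator_of_notMem (by exact h)]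
        have hmA : MeasurableSet {p : ℝ × ℝ | q.1 < p.1 ^ 2 ∧ q.2 < p.2 ^ 2} := by
          have ha : Measurable fun p : ℝ × ℝ => p.1 ^ 2 := measurable_fst.pow_const 2
          have hb : Measurable fun p : ℝ × ℝ => p.2 ^ 2 := measurable_snd.pow_const 2
          exact (ha measurableSet_Ioi).inter (hb measurableSet_Ioi)
        rw [lintegral_congr h1, lintegral_indicator hmA, setLIntegral_one]

lemma chi_event {s : ℝ} (hs : 0 < s) :
    chi d {x : ℝ | s < x ^ 2} = 1 - ENNReal.ofReal (cdf (chi d) (Real.sqrt s)) := by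
  have hsq : 0 < Real.sqrt s := Real.sqrt_pos.2 hs
  have heq : chi d {x : ℝ | s < x ^ 2} = chi d (Ioi (Real.sqrt s)) := by
    apply le_antisymm
    · have hsub : {x : ℝ | s < x ^ 2} ⊆ Ioi (Real.sqrt s) ∪ Iio 0 := by
        intro x hx
        rcases lt_or_ge 0 x with hx0 | hx0
        · exact Or.inl ((Real.sqrt_lt' hx0).2 hx)
        · rcases eq_or_lt_of_le hx0 with rfl | hneg
          · exfalso
            simp only [mem_setOf_eq] at hx
            nlinarith
          · exact Or.inr hneg
      calc chi d {x : ℝ | s < x ^ 2} ≤ chi d (Ioi (Real.sqrt s) ∪ Iio 0) := measure_mono hsub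
        _ ≤ chi d (Ioi (Real.sqrt s)) + chi d (Iio 0) := measure_union_le _ _
        _ = chi d (Ioi (Real.sqrt s)) := by rw [chi_Iio_zero d, add_zero]
    · apply measure_mono
      intro x hx
      simp only [mem_Ioi] at hx
      simp only [mem_setOf_eq]
      nlinarith [Real.sq_sqrt hs.le]
  rw [heq, ← Set.compl_Iic, measure_compl measurableSet_Iic (measure_ne_top _ _),
    measure_univ, ofReal_cdf]

lemma ennreal_arith {a b : ℝ} (ha0 : 0 ≤ a) (ha1 : a ≤ 1) (hb0 : 0 ≤ b) (hb1 : b ≤ 1) :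
    (1 - ENNReal.ofReal a) + (1 - ENNReal.ofReal b) - 1 = ENNReal.ofReal (1 - a - b) := by
  have h1 : (1 : ℝ≥0∞) - ENNReal.ofReal a = ENNReal.ofReal (1 - a) := by
    rw [ENNReal.ofReal_sub 1 ha0, ENNReal.ofReal_one]
  have h2 : (1 : ℝ≥0∞) - ENNReal.ofReal b = ENNReal.ofReal (1 - b) := by
    rw [ENNReal.ofReal_sub 1 hb0, ENNReal.ofReal_one]
  rw [h1, h2, ← ENNReal.ofReal_add (by linarith) (by linarith),
    show (1:ℝ≥0∞) = ENNReal.ofReal 1 from ENNReal.ofReal_one.symm,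
    ← ENNReal.ofReal_sub _ (by norm_num)]
  congr 1
  ring

/-- The Fréchet–Hoeffding lower bound for any coupling. -/
lemma frechet_bound (μ : Measure (ℝ × ℝ)) [IsProbabilityMeasure μ]
    (h1 : μ.map Prod.fst = chi d) (h2 : μ.map Prod.snd = chi d)
    {s t : ℝ} (hs : 0 < s) (ht : 0 < t) :
    ENNReal.ofReal (1 - cdf (chi d) (Real.sqrt s) - cdf (chi d) (Real.sqrt t))
      ≤ μ {p : ℝ × ℝ | s < p.1 ^ 2 ∧ t < p.2 ^ 2} := by
  have hsq : Measurable fun x : ℝ => x ^ 2 := measurable_id.pow_const 2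
  have hA : MeasurableSet {x : ℝ | s < x ^ 2} := hsq measurableSet_Ioi
  have hB : MeasurableSet {x : ℝ | t < x ^ 2} := hsq measurableSet_Ioi
  set U : Set (ℝ × ℝ) := Prod.fst ⁻¹' {x : ℝ | s < x ^ 2} with hU
  set V : Set (ℝ × ℝ) := Prod.snd ⁻¹' {x : ℝ | t < x ^ 2} with hV
  have hUm : MeasurableSet U := measurable_fst hA
  have hVm : MeasurableSet V := measurable_snd hB
  have hμU : μ U = 1 - ENNReal.ofReal (cdf (chi d) (Real.sqrt s)) := by
    rw [hU, ← Measure.map_apply measurable_fst hA, h1, chi_event hs]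
  have hμV : μ V = 1 - ENNReal.ofReal (cdf (chi d) (Real.sqrt t)) := by
    rw [hV, ← Measure.map_apply measurable_snd hB, h2, chi_event ht]
  have hset : {p : ℝ × ℝ | s < p.1 ^ 2 ∧ t < p.2 ^ 2} = U ∩ V := rfl
  rw [hset]
  have hkey : μ U + μ V ≤ μ (U ∩ V) + 1 := by
    have h := measure_union_add_inter (μ := μ) U hVm
    calc μ U + μ V = μ (U ∪ V) + μ (U ∩ V) := h.symm
      _ ≤ 1 + μ (U ∩ V) := by
          refine add_le_add_left ?_ _
          exact (measure_mono (Set.subset_univ _)).trans (le_of_eq measure_univ)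
      _ = μ (U ∩ V) + 1 := add_comm _ _
  have : μ U + μ V - 1 ≤ μ (U ∩ V) := tsub_le_iff_right.2 hkey
  refine le_trans (le_of_eq ?_) this
  rw [hμU, hμV]
  rw [ennreal_arith (cdf_nonneg _ _) (cdf_le_one _ _) (cdf_nonneg _ _) (cdf_le_one _ _)]

lemma sq_lt_iff {u s : ℝ} (hu : u ∈ Ioo (0:ℝ) 1) (hs : 0 < s) :
    s < chiQuantile d u ^ 2 ↔ cdf (chi d) (Real.sqrt s) < u := by
  have hq0 : 0 ≤ chiQuantile d u := chiQuantile_nonneg hu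
  have step : s < chiQuantile d u ^ 2 ↔ Real.sqrt s < chiQuantile d u := by
    rcases eq_or_lt_of_le hq0 with h | h
    · constructor
      · intro hlt; exfalso; rw [← h] at hlt; nlinarith
      · intro hlt; exfalso; rw [← h] at hlt; linarith [Real.sqrt_nonneg s]
    · exact (Real.sqrt_lt' h).symm
  rw [step, lt_chiQuantile hu]

/-- Exact value of the negative-monotone coupling on the corner events. -/
lemma muNM_event {s t : ℝ} (hs : 0 < s) (ht : 0 < t) :
    muNM d {p : ℝ × ℝ | s < p.1 ^ 2 ∧ t < p.2 ^ 2}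
      = ENNReal.ofReal (1 - cdf (chi d) (Real.sqrt s) - cdf (chi d) (Real.sqrt t)) := by
  set a := cdf (chi d) (Real.sqrt s) with ha
  set b := cdf (chi d) (Real.sqrt t) with hb
  rw [muNM_eq, Measure.map_apply (measurable_pairG d) (event_measurableSet (s, t)),
    Measure.restrict_apply ((measurable_pairG d) (event_measurableSet (s, t)))]
  have hset : (fun u => (G d u, G d (1 - u))) ⁻¹' {p : ℝ × ℝ | s < p.1 ^ 2 ∧ t < p.2 ^ 2}
      ∩ Ioo (0:ℝ) 1 = Ioo a (1 - b) := by
    ext u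
    simp only [mem_inter_iff, mem_preimage, mem_setOf_eq, mem_Ioo]
    constructor
    · rintro ⟨⟨h1, h2⟩, hu⟩
      have hu' : u ∈ Ioo (0:ℝ) 1 := hu
      have h1u : (1 - u) ∈ Ioo (0:ℝ) 1 := one_sub_mem hu'
      rw [G_eq hu'] at h1
      rw [G_eq h1u] at h2
      rw [sq_lt_iff hu' hs] at h1
      rw [sq_lt_iff h1u ht] at h2
      constructor
      · exact h1
      · linarith
    · rintro ⟨h1, h2⟩
      have ha0 : 0 ≤ a := cdf_nonneg _ _
      have hb0 : 0 ≤ b := cdf_nonneg _ _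
      have hb1 : b ≤ 1 := cdf_le_one _ _
      have hu' : u ∈ Ioo (0:ℝ) 1 := ⟨by linarith, by linarith⟩
      have h1u : (1 - u) ∈ Ioo (0:ℝ) 1 := one_sub_mem hu'
      refine ⟨⟨?_, ?_⟩, hu'⟩
      · rw [G_eq hu', sq_lt_iff hu' hs]
        exact h1
      · rw [G_eq h1u, sq_lt_iff h1u ht]
        linarith
  rw [hset, Real.volume_Ioo]
  congr 1
  ring

lemma pow4_eq (x : ℝ) : x ^ 4 = (x ^ 2) ^ 2 := by ring

lemma expand_pointwise (p : ℝ × ℝ) :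
    ENNReal.ofReal ((p.1 ^ 2 + p.2 ^ 2) ^ 2)
      = ENNReal.ofReal (p.1 ^ 4) + ENNReal.ofReal (p.2 ^ 4)
        + 2 * (ENNReal.ofReal (p.1 ^ 2) * ENNReal.ofReal (p.2 ^ 2)) := by
  rw [← ENNReal.ofReal_mul (by positivity), ← ENNReal.ofReal_ofNat 2,
    ← ENNReal.ofReal_mul (by norm_num),
    ← ENNReal.ofReal_add (by positivity) (by positivity),
    ← ENNReal.ofReal_add (by positivity) (by positivity)]
  congr 1
  ring

lemma meas_of1 : Measurable fun p : ℝ × ℝ => ENNReal.ofReal (p.1 ^ 4) := by fun_prop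

lemma meas_of2 : Measurable fun p : ℝ × ℝ => ENNReal.ofReal (p.2 ^ 4) := by fun_prop

lemma meas_cross : Measurable fun p : ℝ × ℝ =>
    ENNReal.ofReal (p.1 ^ 2) * ENNReal.ofReal (p.2 ^ 2) := by fun_prop

/-- Expansion of the quartic lintegral into marginal and cross terms. -/
lemma lint_expand (κ : Measure (ℝ × ℝ)) [SFinite κ] :
    ∫⁻ p, ENNReal.ofReal ((p.1 ^ 2 + p.2 ^ 2) ^ 2) ∂κ
      = (∫⁻ p, ENNReal.ofReal (p.1 ^ 4) ∂κ) + (∫⁻ p, ENNReal.ofReal (p.2 ^ 4) ∂κ)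
        + 2 * ∫⁻ q, κ {p : ℝ × ℝ | q.1 < p.1 ^ 2 ∧ q.2 < p.2 ^ 2} ∂σm := by
  rw [← cross_eq κ, lintegral_congr expand_pointwise,
    lintegral_add_left (f := fun p : ℝ × ℝ => ENNReal.ofReal (p.1 ^ 4) + ENNReal.ofReal (p.2 ^ 4)) (meas_of1.add meas_of2), lintegral_add_left meas_of1,
    lintegral_const_mul 2 meas_cross]

lemma map_eval (d : ℕ) (i : Fin d) :
    (Measure.pi fun _ : Fin d => gaussianReal 0 1).map (fun y => y i) = gaussianReal 0 1 := by
  refine Measure.ext fun s hs => ?_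
  rw [Measure.map_apply (measurable_pi_apply i) hs]
  have hpre : (fun y : Fin d → ℝ => y i) ⁻¹' s
      = Set.pi univ (Function.update (fun _ => univ) i s) := Set.eval_preimage
  rw [hpre, Measure.pi_pi]
  rw [Fintype.prod_eq_single i (fun j hj => by
    rw [Function.update_of_ne hj]
    exact measure_univ)]
  rw [Function.update_self]

lemma gauss4 : ∫⁻ t : ℝ, ENNReal.ofReal (t ^ 4) ∂(gaussianReal 0 1) < ∞ := by
  rw [gaussianReal_of_var_ne_zero 0 one_ne_zero,
    lintegral_withDensity_eq_lintegral_mul _ (measurable_gaussianPDF 0 1) (by fun_prop)]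
  set c : ℝ := 64 * (Real.sqrt (2 * Real.pi))⁻¹ with hc
  have hbound : ∀ t : ℝ, (gaussianPDF 0 1 * fun t => ENNReal.ofReal (t ^ 4)) t
      ≤ ENNReal.ofReal (c * Real.exp (-(1/4) * t ^ 2)) := by
    intro t
    simp only [Pi.mul_apply, gaussianPDF]
    rw [← ENNReal.ofReal_mul (gaussianPDFReal_nonneg 0 1 t)]
    apply ENNReal.ofReal_le_ofReal
    have hpdf : gaussianPDFReal 0 1 t = (Real.sqrt (2 * Real.pi))⁻¹ * Real.exp (-t ^ 2 / 2) := by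
      unfold gaussianPDFReal
      norm_num
    rw [hpdf, hc]
    have hπ : (0:ℝ) < Real.sqrt (2 * Real.pi) := Real.sqrt_pos.2 (by positivity)
    have hexp : Real.exp (t ^ 2 / 8) * Real.exp (t ^ 2 / 8) = Real.exp (t ^ 2 / 4) := by
      rw [← Real.exp_add]; congr 1; ring
    have ht4 : t ^ 4 ≤ 64 * Real.exp (t ^ 2 / 4) := by
      nlinarith [Real.add_one_le_exp (t ^ 2 / 8), Real.exp_pos (t ^ 2 / 8), hexp, sq_nonneg t,
        sq_nonneg (t ^ 2)]
    have hmul : Real.exp (t ^ 2 / 4) * Real.exp (-t ^ 2 / 2) = Real.exp (-(1/4) * t ^ 2) := by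
      rw [← Real.exp_add]; congr 1; ring
    rw [← hmul]
    nlinarith [mul_le_mul_of_nonneg_left ht4
      (le_of_lt (mul_pos (inv_pos.2 hπ) (Real.exp_pos (-t ^ 2 / 2))))]
  have hint : Integrable (fun t : ℝ => c * Real.exp (-(1/4) * t ^ 2)) :=
    (integrable_exp_neg_mul_sq (by norm_num : (0:ℝ) < 1/4)).const_mul c
  calc ∫⁻ t, (gaussianPDF 0 1 * fun t => ENNReal.ofReal (t ^ 4)) t
      ≤ ∫⁻ t, ENNReal.ofReal (c * Real.exp (-(1/4) * t ^ 2)) := lintegral_mono hbound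
    _ ≤ ∫⁻ t, ‖c * Real.exp (-(1/4) * t ^ 2)‖₊ := by
        exact lintegral_mono fun t => Real.ofReal_le_enorm _
    _ < ∞ := hint.2

lemma moment4 (d : ℕ) : ∫⁻ x : ℝ, ENNReal.ofReal (x ^ 4) ∂(chi d) < ∞ := by
  unfold chi _root_.stdGaussian
  rw [lintegral_map (by fun_prop) measurable_norm,
    lintegral_map (by fun_prop) (measurable_symm_equiv d)]
  have hnorm : ∀ y : Fin d → ℝ,
      ENNReal.ofReal (‖(EuclideanSpace.equiv (Fin d) ℝ).symm y‖ ^ 4)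
        = ENNReal.ofReal ((∑ i, y i ^ 2) ^ 2) := by
    intro y
    congr 1
    have h : ‖(EuclideanSpace.equiv (Fin d) ℝ).symm y‖
        = Real.sqrt (∑ i, y i ^ 2) := by
      rw [EuclideanSpace.norm_eq]
      congr 1
      refine Finset.sum_congr rfl fun i _ => ?_
      rw [Real.norm_eq_abs, sq_abs]
      rfl
    rw [h, pow4_eq, Real.sq_sqrt (by positivity)]
  rw [lintegral_congr hnorm]
  have hbound : ∀ y : Fin d → ℝ, ENNReal.ofReal ((∑ i, y i ^ 2) ^ 2)
      ≤ ENNReal.ofReal ((d : ℝ) * ∑ i, y i ^ 4) := by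
    intro y
    apply ENNReal.ofReal_le_ofReal
    have h := sq_sum_le_card_mul_sum_sq (s := Finset.univ) (f := fun i => y i ^ 2)
    simp only [Finset.card_univ, Fintype.card_fin] at h
    calc (∑ i, y i ^ 2) ^ 2 ≤ (d : ℝ) * ∑ i, (y i ^ 2) ^ 2 := h
      _ = (d : ℝ) * ∑ i, y i ^ 4 := by
          congr 1
          exact Finset.sum_congr rfl fun i _ => (pow4_eq (y i)).symm
  calc ∫⁻ y : Fin d → ℝ, ENNReal.ofReal ((∑ i, y i ^ 2) ^ 2)
        ∂(Measure.pi fun _ => gaussianReal 0 1)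
      ≤ ∫⁻ y : Fin d → ℝ, ENNReal.ofReal ((d : ℝ) * ∑ i, y i ^ 4)
        ∂(Measure.pi fun _ => gaussianReal 0 1) := lintegral_mono hbound
    _ = ENNReal.ofReal d * ∑ i, ∫⁻ y : Fin d → ℝ, ENNReal.ofReal (y i ^ 4)
        ∂(Measure.pi fun _ => gaussianReal 0 1) := by
        rw [← lintegral_finset_sum _ (fun i _ => by fun_prop),
          ← lintegral_const_mul _ (by fun_prop)]
        refine lintegral_congr fun y => ?_
        rw [ENNReal.ofReal_mul (by positivity), ENNReal.ofReal_sum_of_nonneg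
          (fun i _ => by positivity)]
    _ < ∞ := by
        apply ENNReal.mul_lt_top ENNReal.ofReal_lt_top
        have : ∀ i : Fin d, ∫⁻ y : Fin d → ℝ, ENNReal.ofReal (y i ^ 4)
            ∂(Measure.pi fun _ => gaussianReal 0 1) = ∫⁻ t : ℝ, ENNReal.ofReal (t ^ 4)
            ∂(gaussianReal 0 1) := by
          intro i
          have h := lintegral_map (μ := Measure.pi fun _ : Fin d => gaussianReal 0 1)
            (f := fun t : ℝ => ENNReal.ofReal (t ^ 4)) (g := fun y => y i)
            (by fun_prop) (measurable_pi_apply i)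
          rw [map_eval d i] at h
          exact h.symm
        rw [Finset.sum_congr rfl (fun i _ => this i)]
        simp only [Finset.sum_const, Finset.card_univ, Fintype.card_fin, nsmul_eq_mul]
        exact ENNReal.mul_lt_top (ENNReal.natCast_lt_top d) gauss4

lemma marg_fst (κ : Measure (ℝ × ℝ)) (h : κ.map Prod.fst = chi d) :
    ∫⁻ p, ENNReal.ofReal (p.1 ^ 4) ∂κ = ∫⁻ x : ℝ, ENNReal.ofReal (x ^ 4) ∂(chi d) := by
  rw [← h, lintegral_map (by fun_prop) measurable_fst]

lemma marg_snd (κ : Measure (ℝ × ℝ)) (h : κ.map Prod.snd = chi d) :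
    ∫⁻ p, ENNReal.ofReal (p.2 ^ 4) ∂κ = ∫⁻ x : ℝ, ENNReal.ofReal (x ^ 4) ∂(chi d) := by
  rw [← h, lintegral_map (by fun_prop) measurable_snd]

lemma muNM_marg_fst (d : ℕ) : (muNM d).map Prod.fst = chi d := by
  rw [muNM_eq, Measure.map_map measurable_fst (measurable_pairG d)]
  have : (Prod.fst ∘ fun u => (G d u, G d (1 - u))) = G d := rfl
  rw [this, map_G]

lemma muNM_marg_snd (d : ℕ) : (muNM d).map Prod.snd = chi d := by
  rw [muNM_eq, Measure.map_map measurable_snd (measurable_pairG d)]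
  have hms : Measurable fun u : ℝ => 1 - u := by fun_prop
  have hcomp : (Prod.snd ∘ fun u => (G d u, G d (1 - u))) = (G d) ∘ (fun u : ℝ => 1 - u) := rfl
  rw [hcomp, ← Measure.map_map (measurable_G d) hms,
    measurePreserving_one_sub.map_eq, map_G]

end NMaux

open NMaux

/-- Among all couplings of `χ_d` with itself, the negative monotone coupling minimizes the
expected value of `(x² + y²)²`. -/
theorem negativeMonotone_minimizes_quartic (d : ℕ) (hd : 1 ≤ d)
    (μ : Measure (ℝ × ℝ)) [IsProbabilityMeasure μ]
    (h1 : μ.map Prod.fst = chi d) (h2 : μ.map Prod.snd = chi d) :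
    ∫ p, (p.1 ^ 2 + p.2 ^ 2) ^ 2 ∂(muNM d) ≤ ∫ p, (p.1 ^ 2 + p.2 ^ 2) ^ 2 ∂μ := by
  have hcont : Continuous fun p : ℝ × ℝ => (p.1 ^ 2 + p.2 ^ 2) ^ 2 := by fun_prop
  rw [integral_eq_lintegral_of_nonneg_ae (ae_of_all _ fun p => by positivity)
    hcont.aestronglyMeasurable,
    integral_eq_lintegral_of_nonneg_ae (ae_of_all _ fun p => by positivity)
    hcont.aestronglyMeasurable]
  have hm4 := moment4 d
  -- cross-term comparison
  have hcross : ∫⁻ q, muNM d {p : ℝ × ℝ | q.1 < p.1 ^ 2 ∧ q.2 < p.2 ^ 2} ∂σm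
      ≤ ∫⁻ q, μ {p : ℝ × ℝ | q.1 < p.1 ^ 2 ∧ q.2 < p.2 ^ 2} ∂σm := by
    apply lintegral_mono_ae
    have hmem : ∀ᵐ q ∂σm, q ∈ Ioi (0:ℝ) ×ˢ Ioi (0:ℝ) := by
      unfold σm
      rw [Measure.prod_restrict]
      exact ae_restrict_mem (measurableSet_Ioi.prod measurableSet_Ioi)
    filter_upwards [hmem] with q hq
    rw [muNM_event hq.1 hq.2]
    exact frechet_bound μ h1 h2 hq.1 hq.2
  have hμexp := lint_expand μ
  have hνexp := lint_expand (muNM d)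
  have hineq : ∫⁻ p, ENNReal.ofReal ((p.1 ^ 2 + p.2 ^ 2) ^ 2) ∂(muNM d)
      ≤ ∫⁻ p, ENNReal.ofReal ((p.1 ^ 2 + p.2 ^ 2) ^ 2) ∂μ := by
    rw [hμexp, hνexp, marg_fst μ h1, marg_snd μ h2, marg_fst (muNM d) (muNM_marg_fst d),
      marg_snd (muNM d) (muNM_marg_snd d)]
    exact add_le_add_right (mul_le_mul_right hcross 2) _
  have hfin : ∫⁻ p, ENNReal.ofReal ((p.1 ^ 2 + p.2 ^ 2) ^ 2) ∂μ < ∞ := by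
    rw [hμexp, marg_fst μ h1, marg_snd μ h2]
    apply ENNReal.add_lt_top.2
    constructor
    · exact ENNReal.add_lt_top.2 ⟨hm4, hm4⟩
    · apply ENNReal.mul_lt_top (by norm_num)
      rw [← cross_eq μ]
      have hb : ∀ p : ℝ × ℝ, ENNReal.ofReal (p.1 ^ 2) * ENNReal.ofReal (p.2 ^ 2)
          ≤ ENNReal.ofReal (p.1 ^ 4) + ENNReal.ofReal (p.2 ^ 4) := by
        intro p
        rw [← ENNReal.ofReal_mul (by positivity),
          ← ENNReal.ofReal_add (by positivity) (by positivity)]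
        apply ENNReal.ofReal_le_ofReal
        nlinarith [sq_nonneg (p.1 ^ 2 - p.2 ^ 2)]
      calc ∫⁻ p, ENNReal.ofReal (p.1 ^ 2) * ENNReal.ofReal (p.2 ^ 2) ∂μ
          ≤ ∫⁻ p, ENNReal.ofReal (p.1 ^ 4) + ENNReal.ofReal (p.2 ^ 4) ∂μ := lintegral_mono hb
        _ = (∫⁻ p, ENNReal.ofReal (p.1 ^ 4) ∂μ) + ∫⁻ p, ENNReal.ofReal (p.2 ^ 4) ∂μ :=
            lintegral_add_left meas_of1 _
        _ < ∞ := by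
            rw [marg_fst μ h1, marg_snd μ h2]
            exact ENNReal.add_lt_top.2 ⟨hm4, hm4⟩
  exact ENNReal.toReal_mono hfin.ne hineq

end
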